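/- Let J ≥ 1, h > 0, η₀ > 0, L ≥ 0, and let a_1,…,a_J ∈ ℝ satisfy a_i ≥ η₀ for all i and |a_i − a_{i−1}| ≤ L h for 2 ≤ i ≤ J. Let Δ = diag(a_1,…,a_J) and let A₀ be the J×J tridiagonal matrix with stencil (−1, 2, −1). Then for every x ∈ ℝ^J: ⟨Δ A₀² x, x⟩ ≥ (η₀/2) ‖A₀ x‖₂² − (2 L² h² / η₀) ‖x‖₂². In particular ⟨Δ A₀² x, x⟩ ≥ −(2 L² h² / η₀) ‖x‖₂², so the quadratic form of the fourth-order correction term (1/(12h²)) Δ B₀, with B₀ the pentadiagonal matrix with stencil (1,−4,6,−4,1), is bounded below by −c ‖x‖₂² for a constant c depending only on η₀ and L (using B₀ = A₀² + E with E positive semidefinite). -/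

import Mathlib

/-- The `J×J` tridiagonal matrix with stencil `(−1, 2, −1)`. -/
def A0 (J : ℕ) : Matrix (Fin J) (Fin J) ℝ :=
  Matrix.of fun i j =>
    if i = j then 2
    else if (i : ℕ) + 1 = (j : ℕ) ∨ (j : ℕ) + 1 = (i : ℕ) then -1
    else 0

/-- The `J×J` pentadiagonal matrix with stencil `(1, −4, 6, −4, 1)`. -/
def B0 (J : ℕ) : Matrix (Fin J) (Fin J) ℝ :=
  Matrix.of fun i j =>
    if i = j then 6
    else if (i : ℕ) + 1 = (j : ℕ) ∨ (j : ℕ) + 1 = (i : ℕ) then -4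
    else if (i : ℕ) + 2 = (j : ℕ) ∨ (j : ℕ) + 2 = (i : ℕ) then 1
    else 0

lemma A0_apply {J : ℕ} (i j : Fin J) :
    A0 J i j = (if (i:ℕ) = (j:ℕ) then 2 else 0) + (if (i:ℕ)+1 = (j:ℕ) then -1 else 0)
      + (if (j:ℕ)+1 = (i:ℕ) then -1 else 0) := by
  unfold A0
  simp only [Matrix.of_apply, Fin.ext_iff]
  split_ifs <;> first | ring1 | (exfalso; omega)

lemma B0_apply {J : ℕ} (i j : Fin J) :
    B0 J i j = (if (i:ℕ) = (j:ℕ) then 6 else 0) + (if (i:ℕ)+1 = (j:ℕ) then -4 else 0)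
      + (if (j:ℕ)+1 = (i:ℕ) then -4 else 0) + (if (i:ℕ)+2 = (j:ℕ) then 1 else 0)
      + (if (j:ℕ)+2 = (i:ℕ) then 1 else 0) := by
  unfold B0
  simp only [Matrix.of_apply, Fin.ext_iff]
  split_ifs <;> first | ring1 | (exfalso; omega)

lemma A0_symm {J : ℕ} (i j : Fin J) : A0 J i j = A0 J j i := by
  rw [A0_apply, A0_apply]; split_ifs <;> first | ring1 | (exfalso; omega)

lemma sum_pick {J : ℕ} (n : ℕ) (hn : n < J) (f : Fin J → ℝ) :
    ∑ k : Fin J, (if (k:ℕ) = n then f k else 0) = f ⟨n, hn⟩ := by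
  rw [Finset.sum_eq_single (⟨n, hn⟩ : Fin J)]
  · simp
  · intro k _ hk
    rw [if_neg]
    intro hkn
    exact hk (Fin.ext hkn)
  · simp

lemma sum_pick_ge {J : ℕ} (n : ℕ) (hn : ¬ n < J) (f : Fin J → ℝ) :
    ∑ k : Fin J, (if (k:ℕ) = n then f k else 0) = 0 := by
  apply Finset.sum_eq_zero
  intro k _
  rw [if_neg]
  have := k.isLt
  omega

lemma A0_sq_apply {J : ℕ} (i j : Fin J) :
    (A0 J * A0 J) i j = 2 * A0 J i j
      + (if h : (i:ℕ)+1 < J then -A0 J ⟨(i:ℕ)+1, h⟩ j else 0)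
      + (if h : 1 ≤ (i:ℕ) then -A0 J ⟨(i:ℕ)-1, lt_of_le_of_lt (Nat.sub_le _ _) i.isLt⟩ j else 0) := by
  rw [Matrix.mul_apply]
  have hterm : ∀ k : Fin J, A0 J i k * A0 J k j
      = (if (k:ℕ) = (i:ℕ) then 2 * A0 J k j else 0)
        + (if (k:ℕ) = (i:ℕ)+1 then -A0 J k j else 0)
        + (if (k:ℕ)+1 = (i:ℕ) then -A0 J k j else 0) := by
    intro k
    rw [A0_apply i k]
    split_ifs <;> first | ring1 | (exfalso; omega)
  simp only [hterm]
  rw [Finset.sum_add_distrib, Finset.sum_add_distrib]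
  have e1 : ∑ k : Fin J, (if (k:ℕ) = (i:ℕ) then 2 * A0 J k j else 0) = 2 * A0 J i j := by
    rw [sum_pick (i:ℕ) i.isLt (fun k => 2 * A0 J k j)]
  have e2 : ∑ k : Fin J, (if (k:ℕ) = (i:ℕ)+1 then -A0 J k j else 0)
      = (if h : (i:ℕ)+1 < J then -A0 J ⟨(i:ℕ)+1, h⟩ j else 0) := by
    by_cases h1 : (i:ℕ)+1 < J
    · rw [sum_pick ((i:ℕ)+1) h1 (fun k => -A0 J k j), dif_pos h1]
    · rw [sum_pick_ge ((i:ℕ)+1) h1 (fun k => -A0 J k j), dif_neg h1]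
  have e3 : ∑ k : Fin J, (if (k:ℕ)+1 = (i:ℕ) then -A0 J k j else 0)
      = (if h : 1 ≤ (i:ℕ) then
          -A0 J ⟨(i:ℕ)-1, lt_of_le_of_lt (Nat.sub_le _ _) i.isLt⟩ j else 0) := by
    by_cases h2 : 1 ≤ (i:ℕ)
    · have hcond : ∀ k : Fin J, ((k:ℕ)+1 = (i:ℕ)) = ((k:ℕ) = (i:ℕ)-1) := by
        intro k; apply propext; omega
      simp only [hcond]
      rw [sum_pick ((i:ℕ)-1) (lt_of_le_of_lt (Nat.sub_le _ _) i.isLt) (fun k => -A0 J k j),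
        dif_pos h2]
    · rw [dif_neg h2]
      apply Finset.sum_eq_zero
      intro k _
      rw [if_neg]
      omega
  rw [e1, e2, e3]

lemma A0_sq_offdiag {J : ℕ} {i j : Fin J} (hij : ¬ (i:ℕ) = (j:ℕ)) :
    (A0 J * A0 J) i j = B0 J i j := by
  rw [A0_sq_apply, B0_apply]
  have hi := i.isLt
  have hj := j.isLt
  by_cases h1 : (i:ℕ)+1 < J <;> by_cases h2 : 1 ≤ (i:ℕ) <;>
    simp only [h1, h2, dite_true, dite_false, A0_apply] <;>
    split_ifs <;> first | (exfalso; omega) | ring1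

lemma A0_sq_diag_le {J : ℕ} (i : Fin J) : (A0 J * A0 J) i i ≤ 6 := by
  rw [A0_sq_apply]
  have hi := i.isLt
  by_cases h1 : (i:ℕ)+1 < J <;> by_cases h2 : 1 ≤ (i:ℕ) <;>
    simp only [h1, h2, dite_true, dite_false, A0_apply] <;>
    split_ifs <;> first | (exfalso; omega) | norm_num

lemma young_aux {η₀ L h : ℝ} (hη : 0 < η₀) (hL : 0 ≤ L) (hh : 0 ≤ h)
    (w u v : ℝ) (hw : |w| ≤ L * h) :
    -(η₀/4 * (v*v) + L^2*h^2/η₀ * (u*u)) ≤ w * u * v := by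
  have hLh : 0 ≤ L * h := mul_nonneg hL hh
  have h1 : -(L*h*(|u| * |v|)) ≤ w * u * v := by
    have habs : |w * u * v| ≤ L*h*(|u| * |v|) := by
      rw [abs_mul, abs_mul]
      have h2 : |w| * |u| ≤ L*h*|u| := mul_le_mul_of_nonneg_right hw (abs_nonneg u)
      calc |w| * |u| * |v| ≤ L*h*|u| * |v| := mul_le_mul_of_nonneg_right h2 (abs_nonneg v)
        _ = L*h*(|u| * |v|) := by ring
    linarith [neg_abs_le (w*u*v)]
  have h2 : L*h*(|u| * |v|) ≤ η₀/4 * (v*v) + L^2*h^2/η₀ * (u*u) := by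
    rw [← mul_le_mul_iff_of_pos_right hη]
    have hne : η₀ ≠ 0 := ne_of_gt hη
    have hexp : (η₀/4 * (v*v) + L^2*h^2/η₀ * (u*u)) * η₀
        = η₀^2/4*(v*v) + L^2*h^2*(u*u) := by field_simp
    rw [hexp]
    have key : L*h*(|u| * |v|) * η₀ ≤ η₀^2/4*(|v| * |v|) + L^2*h^2*(|u| * |u|) := by
      nlinarith [sq_nonneg (η₀*|v| - 2*(L*h)*|u|)]
    rw [abs_mul_abs_self, abs_mul_abs_self] at key
    exact key
  linarith

lemma sum_ite_le {J : ℕ} (P : Fin J → Prop) [DecidablePred P]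
    (hP : ∀ k l, P k → P l → k = l) {c : ℝ} (hc : 0 ≤ c) :
    ∑ k : Fin J, (if P k then c else 0) ≤ c := by
  by_cases hex : ∃ k, P k
  · obtain ⟨k0, hk0⟩ := hex
    rw [Finset.sum_eq_single k0]
    · rw [if_pos hk0]
    · intro l _ hl
      rw [if_neg]
      intro hPl
      exact hl (hP l k0 hPl hk0)
    · intro hk
      exact absurd (Finset.mem_univ k0) hk
  · have : ∑ k : Fin J, (if P k then c else 0) = 0 := by
      apply Finset.sum_eq_zero
      intro k _
      rw [if_neg]
      exact fun hPk => hex ⟨k, hPk⟩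
    rw [this]
    exact hc


/-- Coercivity of the fourth-order correction term: for
`Δ = diag(a)` with `a ≥ η₀` and `|a_i − a_{i−1}| ≤ Lh`,
`⟨ΔA₀²x, x⟩ ≥ (η₀/2)‖A₀x‖₂² − (2L²h²/η₀)‖x‖₂² ≥ −(2L²h²/η₀)‖x‖₂²`,
and there is `c ≥ 0` depending only on `η₀, L` with
`⟨(1/(12h²))ΔB₀ x, x⟩ ≥ −c‖x‖₂²`. -/
theorem fourth_order_correction_coercivity
    (η₀ L : ℝ) (hη : 0 < η₀) (hL : 0 ≤ L) :
    ∃ c : ℝ, 0 ≤ c ∧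
      ∀ (J : ℕ), 1 ≤ J → ∀ (h : ℝ), 0 < h →
      ∀ a : Fin J → ℝ,
        (∀ i, η₀ ≤ a i) →
        (∀ i j : Fin J, (i : ℕ) + 1 = (j : ℕ) → |a j - a i| ≤ L * h) →
      ∀ x : Fin J → ℝ,
        ((η₀ / 2) * ∑ i, ((A0 J).mulVec x i)^2
            - (2 * L^2 * h^2 / η₀) * ∑ i, (x i)^2
          ≤ ∑ i, (Matrix.diagonal a * (A0 J)^2).mulVec x i * x i) ∧
        (-(2 * L^2 * h^2 / η₀) * ∑ i, (x i)^2
          ≤ ∑ i, (Matrix.diagonal a * (A0 J)^2).mulVec x i * x i) ∧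
        (-c * ∑ i, (x i)^2
          ≤ ∑ i, ((1/(12*h^2)) • (Matrix.diagonal a * B0 J)).mulVec x i * x i) := by
  refine ⟨L^2/(6*η₀), by positivity, ?_⟩
  intro J hJ h hh a ha hLip x
  set y : Fin J → ℝ := (A0 J).mulVec x with hy
  have hyk : ∀ k, y k = ∑ i, A0 J k i * x i := by
    intro k
    simp [hy, Matrix.mulVec, dotProduct]
  -- the quadratic form as a double sum
  have hS : ∑ i, (Matrix.diagonal a * (A0 J)^2).mulVec x i * x i
      = ∑ i, ∑ k, a i * A0 J i k * y k * x i := by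
    apply Finset.sum_congr rfl
    intro i _
    have h1 : (Matrix.diagonal a * (A0 J)^2).mulVec x i = a i * ∑ k, A0 J i k * y k := by
      have h3 : (Matrix.diagonal a).mulVec ((A0 J).mulVec ((A0 J).mulVec x))
          = (Matrix.diagonal a * (A0 J)^2).mulVec x := by
        rw [Matrix.mulVec_mulVec, Matrix.mulVec_mulVec, Matrix.mul_assoc, ← pow_two]
      rw [← h3, Matrix.mulVec_diagonal, ← hy]
      congr 1
    rw [h1, Finset.mul_sum, Finset.sum_mul]
    exact Finset.sum_congr rfl (fun k _ => by ring)
  -- split into diagonal-coefficient part and commutator part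
  have hsplit : ∑ i, ∑ k, a i * A0 J i k * y k * x i
      = (∑ k : Fin J, a k * (y k * y k))
        + ∑ i, ∑ k, (a i - a k) * A0 J i k * x i * y k := by
    have e1 : ∀ i k : Fin J, a i * A0 J i k * y k * x i
        = a k * (A0 J i k * x i) * y k + (a i - a k) * A0 J i k * x i * y k := by
      intro i k; ring
    simp only [e1]
    simp only [Finset.sum_add_distrib]
    congr 1
    rw [Finset.sum_comm]
    apply Finset.sum_congr rfl
    intro k _
    have e3 : ∀ i : Fin J, a k * (A0 J i k * x i) * y k = a k * ((A0 J k i * x i) * y k) := by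
      intro i; rw [A0_symm i k]; ring
    simp only [e3]
    rw [← Finset.mul_sum, ← Finset.sum_mul, ← hyk]
  -- per-term bound on the commutator part
  have hterm : ∀ i k : Fin J,
      -((if (i:ℕ)+1 = (k:ℕ) then η₀/4 * (y k * y k) + (L^2*h^2/η₀) * (x i * x i) else 0)
        + (if (k:ℕ)+1 = (i:ℕ) then η₀/4 * (y k * y k) + (L^2*h^2/η₀) * (x i * x i) else 0))
      ≤ (a i - a k) * A0 J i k * x i * y k := by
    intro i k
    by_cases h1 : (i:ℕ)+1 = (k:ℕ)
    · have hik : ¬ i = k := by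
        intro he; rw [he] at h1; omega
      have h2 : ¬ (k:ℕ)+1 = (i:ℕ) := by omega
      have hA : A0 J i k = -1 := by
        unfold A0; simp only [Matrix.of_apply]; rw [if_neg hik, if_pos (Or.inl h1)]
      rw [hA, if_pos h1, if_neg h2]
      have hw : |a k - a i| ≤ L * h := hLip i k h1
      have hyg := young_aux hη hL hh.le (a k - a i) (x i) (y k) hw
      linarith [hyg]
    · by_cases h2 : (k:ℕ)+1 = (i:ℕ)
      · have hik : ¬ i = k := by
          intro he; rw [he] at h2; omega
        have hA : A0 J i k = -1 := by
          unfold A0; simp only [Matrix.of_apply]; rw [if_neg hik, if_pos (Or.inr h2)]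
        rw [hA, if_neg h1, if_pos h2]
        have hw : |a k - a i| ≤ L * h := by
          rw [abs_sub_comm]; exact hLip k i h2
        have hyg := young_aux hη hL hh.le (a k - a i) (x i) (y k) hw
        linarith [hyg]
      · rw [if_neg h1, if_neg h2]
        by_cases hik : i = k
        · subst hik; simp
        · have hA : A0 J i k = 0 := by
            unfold A0; simp only [Matrix.of_apply]
            rw [if_neg hik, if_neg (by exact fun hor => hor.elim h1 h2)]
          rw [hA]
          norm_num
  -- bounds for the two indicator double sums
  have huniq : ∀ (n : ℕ) (p q : Fin J), (p:ℕ) = n → (q:ℕ) = n → p = q := by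
    intro n p q hp hq; exact Fin.ext (by omega)
  have hb1 : ∑ i : Fin J, ∑ k : Fin J, (if (i:ℕ)+1 = (k:ℕ) then η₀/4 * (y k * y k) + (L^2*h^2/η₀) * (x i * x i) else 0)
      ≤ (∑ k : Fin J, η₀/4 * (y k * y k)) + (∑ i : Fin J, (L^2*h^2/η₀) * (x i * x i)) := by
    have hsplitif : ∀ i k : Fin J,
        (if (i:ℕ)+1 = (k:ℕ) then η₀/4 * (y k * y k) + (L^2*h^2/η₀) * (x i * x i) else 0)
        = (if (i:ℕ)+1 = (k:ℕ) then η₀/4 * (y k * y k) else 0)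
          + (if (i:ℕ)+1 = (k:ℕ) then (L^2*h^2/η₀) * (x i * x i) else 0) := by
      intro i k; split_ifs <;> simp
    simp only [hsplitif]
    simp only [Finset.sum_add_distrib]
    apply add_le_add
    · rw [Finset.sum_comm]
      apply Finset.sum_le_sum
      intro k _
      apply sum_ite_le (fun i : Fin J => (i:ℕ)+1 = (k:ℕ))
      · intro p q hp hq; exact Fin.ext (by omega)
      · exact mul_nonneg (by positivity) (mul_self_nonneg _)
    · apply Finset.sum_le_sum
      intro i _
      apply sum_ite_le (fun k : Fin J => (i:ℕ)+1 = (k:ℕ))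
      · intro p q hp hq; exact Fin.ext (by omega)
      · exact mul_nonneg (by positivity) (mul_self_nonneg _)
  have hb2 : ∑ i : Fin J, ∑ k : Fin J, (if (k:ℕ)+1 = (i:ℕ) then η₀/4 * (y k * y k) + (L^2*h^2/η₀) * (x i * x i) else 0)
      ≤ (∑ k : Fin J, η₀/4 * (y k * y k)) + (∑ i : Fin J, (L^2*h^2/η₀) * (x i * x i)) := by
    have hsplitif : ∀ i k : Fin J,
        (if (k:ℕ)+1 = (i:ℕ) then η₀/4 * (y k * y k) + (L^2*h^2/η₀) * (x i * x i) else 0)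
        = (if (k:ℕ)+1 = (i:ℕ) then η₀/4 * (y k * y k) else 0)
          + (if (k:ℕ)+1 = (i:ℕ) then (L^2*h^2/η₀) * (x i * x i) else 0) := by
      intro i k; split_ifs <;> simp
    simp only [hsplitif]
    simp only [Finset.sum_add_distrib]
    apply add_le_add
    · rw [Finset.sum_comm]
      apply Finset.sum_le_sum
      intro k _
      apply sum_ite_le (fun i : Fin J => (k:ℕ)+1 = (i:ℕ))
      · intro p q hp hq; exact Fin.ext (by omega)
      · exact mul_nonneg (by positivity) (mul_self_nonneg _)
    · apply Finset.sum_le_sum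
      intro i _
      apply sum_ite_le (fun k : Fin J => (k:ℕ)+1 = (i:ℕ))
      · intro p q hp hq; exact Fin.ext (by omega)
      · exact mul_nonneg (by positivity) (mul_self_nonneg _)
  -- lower bound on the commutator part
  have hcomm : -((∑ k : Fin J, η₀/4 * (y k * y k)) + (∑ i : Fin J, (L^2*h^2/η₀) * (x i * x i)))
      - ((∑ k : Fin J, η₀/4 * (y k * y k)) + (∑ i : Fin J, (L^2*h^2/η₀) * (x i * x i)))
      ≤ ∑ i, ∑ k, (a i - a k) * A0 J i k * x i * y k := by
    have hsum1 : ∑ i : Fin J, ∑ k : Fin J,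
        (-((if (i:ℕ)+1 = (k:ℕ) then η₀/4 * (y k * y k) + (L^2*h^2/η₀) * (x i * x i) else 0)
          + (if (k:ℕ)+1 = (i:ℕ) then η₀/4 * (y k * y k) + (L^2*h^2/η₀) * (x i * x i) else 0)))
        ≤ ∑ i, ∑ k, (a i - a k) * A0 J i k * x i * y k :=
      Finset.sum_le_sum (fun i _ => Finset.sum_le_sum (fun k _ => hterm i k))
    have heq : ∑ i : Fin J, ∑ k : Fin J,
        (-((if (i:ℕ)+1 = (k:ℕ) then η₀/4 * (y k * y k) + (L^2*h^2/η₀) * (x i * x i) else 0)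
          + (if (k:ℕ)+1 = (i:ℕ) then η₀/4 * (y k * y k) + (L^2*h^2/η₀) * (x i * x i) else 0)))
        = -(∑ i : Fin J, ∑ k : Fin J, (if (i:ℕ)+1 = (k:ℕ) then η₀/4 * (y k * y k) + (L^2*h^2/η₀) * (x i * x i) else 0))
          - (∑ i : Fin J, ∑ k : Fin J, (if (k:ℕ)+1 = (i:ℕ) then η₀/4 * (y k * y k) + (L^2*h^2/η₀) * (x i * x i) else 0)) := by
      simp only [neg_add, Finset.sum_add_distrib, Finset.sum_neg_distrib, sub_eq_add_neg]
    rw [heq] at hsum1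
    linarith [hb1, hb2]
  -- diagonal part bound
  have hdiag : ∑ k : Fin J, η₀ * (y k * y k) ≤ ∑ k : Fin J, a k * (y k * y k) :=
    Finset.sum_le_sum (fun k _ => mul_le_mul_of_nonneg_right (ha k) (mul_self_nonneg _))
  -- factor constants out of sums
  have hYfac4 : ∑ k : Fin J, η₀/4 * (y k * y k) = η₀/4 * ∑ k : Fin J, (y k * y k) :=
    (Finset.mul_sum _ _ _).symm
  have hYfac : ∑ k : Fin J, η₀ * (y k * y k) = η₀ * ∑ k : Fin J, (y k * y k) :=
    (Finset.mul_sum _ _ _).symm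
  have hXfac : ∑ i : Fin J, (L^2*h^2/η₀) * (x i * x i) = (L^2*h^2/η₀) * ∑ i : Fin J, (x i * x i) :=
    (Finset.mul_sum _ _ _).symm
  have hYnn : 0 ≤ ∑ k : Fin J, (y k * y k) :=
    Finset.sum_nonneg (fun k _ => mul_self_nonneg _)
  have hXnn : 0 ≤ ∑ i : Fin J, (x i * x i) :=
    Finset.sum_nonneg (fun i _ => mul_self_nonneg _)
  -- the main estimate
  have main : η₀/2 * (∑ i : Fin J, y i * y i) - (2*L^2*h^2/η₀) * (∑ i : Fin J, x i * x i)
      ≤ ∑ i, (Matrix.diagonal a * (A0 J)^2).mulVec x i * x i := by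
    rw [hS, hsplit]
    rw [hYfac4, hXfac] at hcomm
    rw [hYfac] at hdiag
    have hdiv : 2 * L^2 * h^2 / η₀ * (∑ i : Fin J, x i * x i)
        = L^2*h^2/η₀ * (∑ i : Fin J, x i * x i) + L^2*h^2/η₀ * (∑ i : Fin J, x i * x i) := by
      ring
    linarith [hcomm, hdiag, hdiv]
  have hsqy : ∑ i, ((A0 J).mulVec x i)^2 = ∑ i : Fin J, y i * y i := by
    apply Finset.sum_congr rfl
    intro i _
    rw [← hy, pow_two]
  have hsqx : ∑ i, (x i)^2 = ∑ i : Fin J, x i * x i := by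
    apply Finset.sum_congr rfl
    intro i _
    rw [pow_two]
  have goal2 : -(2 * L^2 * h^2 / η₀) * ∑ i, (x i)^2
      ≤ ∑ i, (Matrix.diagonal a * (A0 J)^2).mulVec x i * x i := by
    rw [hsqx]
    nlinarith [main, hYnn, hη]
  refine ⟨?_, goal2, ?_⟩
  · rw [hsqy, hsqx]
    linarith [main]
  -- third inequality
  · have hAexp : ∀ (M : Matrix (Fin J) (Fin J) ℝ) (i : Fin J),
        (Matrix.diagonal a * M).mulVec x i = ∑ j, a i * M i j * x j := by
      intro M i
      simp [Matrix.mulVec, dotProduct]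
    have hBsum : ∑ i, (Matrix.diagonal a * (A0 J)^2).mulVec x i * x i
        ≤ ∑ i, (Matrix.diagonal a * B0 J).mulVec x i * x i := by
      apply Finset.sum_le_sum
      intro i _
      rw [hAexp ((A0 J)^2) i, hAexp (B0 J) i, Finset.sum_mul, Finset.sum_mul]
      apply Finset.sum_le_sum
      intro j _
      by_cases hij : (i:ℕ) = (j:ℕ)
      · have hij' : i = j := Fin.ext hij
        subst hij'
        have h6 : ((A0 J)^2) i i ≤ 6 := by
          rw [pow_two]; exact A0_sq_diag_le i
        have hB6 : B0 J i i = 6 := by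
          unfold B0; simp
        rw [hB6]
        have hai : 0 ≤ a i := le_trans hη.le (ha i)
        nlinarith [mul_nonneg (mul_nonneg (sub_nonneg.mpr h6) hai) (mul_self_nonneg (x i))]
      · have hoff : ((A0 J)^2) i j = B0 J i j := by
          rw [pow_two]; exact A0_sq_offdiag hij
        rw [hoff]
    have hsmul : ∑ i, ((1/(12*h^2)) • (Matrix.diagonal a * B0 J)).mulVec x i * x i
        = (1/(12*h^2)) * ∑ i, (Matrix.diagonal a * B0 J).mulVec x i * x i := by
      rw [Finset.mul_sum]
      apply Finset.sum_congr rfl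
      intro i _
      rw [Matrix.smul_mulVec]
      simp only [Pi.smul_apply, smul_eq_mul]
      ring
    rw [hsmul, hsqx]
    have hchain : -(2 * L^2 * h^2 / η₀) * (∑ i : Fin J, x i * x i)
        ≤ ∑ i, (Matrix.diagonal a * B0 J).mulVec x i * x i := by
      rw [hsqx] at goal2
      linarith [goal2, hBsum]
    have h12 : (0:ℝ) < 1/(12*h^2) := by positivity
    have hmul := mul_le_mul_of_nonneg_left hchain h12.le
    have hfe : (1/(12*h^2)) * (-(2 * L^2 * h^2 / η₀) * (∑ i : Fin J, x i * x i))
        = -(L^2/(6*η₀)) * (∑ i : Fin J, x i * x i) := by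
      have hne : h ≠ 0 := ne_of_gt hh
      have hηne : η₀ ≠ 0 := ne_of_gt hη
      field_simp
      ring
    rw [hfe] at hmul
    exact hmul
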